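/- arXiv:2405.10297 — 2 statements merged into one kernel-verified Lean document; each statement's English description precedes it below -/
import Mathlib

section
/- Every affine source of min-entropy k is a sumset source: if X is uniform over a k-dimensional affine subspace of F_2^n with k = k1 + k2 for positive integers k1, k2, then X = A + B where A and B are independent sources each with min-entropy at least min(k1, k2). -/
open scoped Classical

/-- `p` is a probability distribution on `𝔽₂ⁿ`. -/
def IsSource {n : ℕ} (p : (Fin n → ZMod 2) → ℝ) : Prop :=
  (∀ x, 0 ≤ p x) ∧ ∑ x, p x = 1

/-- `p` has min-entropy at least `k`: every atom has probability at most `2⁻ᵏ`. -/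
def MinEntGe {n : ℕ} (p : (Fin n → ZMod 2) → ℝ) (k : ℕ) : Prop :=
  ∀ x, p x ≤ 1 / 2 ^ k

lemma hvv {n : ℕ} (v : Fin n → ZMod 2) : v + v = 0 := by
  funext i; exact CharTwo.add_self_eq_zero _

lemma h2smul {n : ℕ} (v : Fin n → ZMod 2) : (2 : ℕ) • v = 0 := by
  rw [two_smul]; exact hvv v

lemma hcancel {n : ℕ} {v w : Fin n → ZMod 2} (h : v + w = 0) : v = w := by
  have := congrArg (· + w) h
  simpa [add_assoc, hvv] using this

lemma exists_split (n k k₁ k₂ : ℕ) (hk : k = k₁ + k₂)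
    (V : Submodule (ZMod 2) (Fin n → ZMod 2)) (hV : Module.finrank (ZMod 2) V = k) :
    ∃ W₁ W₂ : Submodule (ZMod 2) V, IsCompl W₁ W₂ ∧
      Module.finrank (ZMod 2) W₁ = k₁ ∧ Module.finrank (ZMod 2) W₂ = k₂ := by
  have hb := Module.finBasis (ZMod 2) V
  rw [hV] at hb
  set b := hb
  have hle : k₁ ≤ k := by omega
  let ι : Fin k₁ → Fin k := Fin.castLE hle
  have hli : LinearIndependent (ZMod 2) (b ∘ ι) :=
    b.linearIndependent.comp ι (Fin.castLE_injective hle)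
  set W₁ := Submodule.span (ZMod 2) (Set.range (b ∘ ι)) with hW₁
  obtain ⟨W₂, hc⟩ := W₁.exists_isCompl
  have hr1 : Module.finrank (ZMod 2) W₁ = k₁ := by
    rw [hW₁, finrank_span_eq_card hli, Fintype.card_fin]
  have hsum := Submodule.finrank_add_eq_of_isCompl hc
  rw [hV, hr1] at hsum
  exact ⟨W₁, W₂, hc, hr1, by omega⟩

lemma sum_unif {n d : ℕ} (U : Submodule (ZMod 2) (Fin n → ZMod 2))
    (hU : Module.finrank (ZMod 2) U = d) :
    ∑ x, (if x ∈ U then (1 : ℝ) / 2 ^ d else 0) = 1 := by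
  classical
  rw [← Finset.sum_filter, Finset.sum_const, nsmul_eq_mul]
  have hcard : (Finset.univ.filter (· ∈ U)).card = 2 ^ d := by
    rw [← Fintype.card_subtype]
    have := Module.card_eq_pow_finrank (K := ZMod 2) (V := U)
    rw [ZMod.card, hU] at this
    simpa using this
  rw [hcard]
  push_cast
  field_simp

/-- Every affine source of min-entropy `k = k₁ + k₂` (uniform on a coset `a + V` of a
`k`-dimensional subspace `V`) is a sumset source `A + B` of two independent sources of
min-entropy at least `min k₁ k₂` each. -/
theorem stmt6 (n k k₁ k₂ : ℕ) (hk : k = k₁ + k₂) (h₁ : 0 < k₁) (h₂ : 0 < k₂)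
    (V : Submodule (ZMod 2) (Fin n → ZMod 2)) (hV : Module.finrank (ZMod 2) V = k)
    (a : Fin n → ZMod 2) :
    ∃ pA pB : (Fin n → ZMod 2) → ℝ,
      IsSource pA ∧ IsSource pB ∧
      MinEntGe pA (min k₁ k₂) ∧ MinEntGe pB (min k₁ k₂) ∧
      ∀ x, (if x + a ∈ V then (1 : ℝ) / 2 ^ k else 0) = ∑ b, pA b * pB (x + b) := by
  classical
  obtain ⟨W₁, W₂, hc, hr1, hr2⟩ := exists_split n k k₁ k₂ hk V hV
  set U₁ := W₁.map V.subtype with hU₁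
  set U₂ := W₂.map V.subtype with hU₂
  have hru1 : Module.finrank (ZMod 2) U₁ = k₁ := by
    rw [hU₁, Submodule.finrank_map_subtype_eq]; exact hr1
  have hru2 : Module.finrank (ZMod 2) U₂ = k₂ := by
    rw [hU₂, Submodule.finrank_map_subtype_eq]; exact hr2
  have hsup : U₁ ⊔ U₂ = V := by
    rw [hU₁, hU₂, ← Submodule.map_sup, hc.sup_eq_top, Submodule.map_subtype_top]
  have hdisj : ∀ u, u ∈ U₁ → u ∈ U₂ → u = 0 := by
    intro u hu1 hu2
    obtain ⟨w₁, hw₁, rfl⟩ := hu1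
    obtain ⟨w₂, hw₂, hw⟩ := hu2
    have hww : w₂ = w₁ := Subtype.ext hw
    subst hww
    have hmem : w₂ ∈ W₁ ⊓ W₂ := ⟨hw₁, hw₂⟩
    rw [hc.inf_eq_bot, Submodule.mem_bot] at hmem
    simp [hmem]
  refine ⟨fun x => if x + a ∈ U₁ then (1 : ℝ) / 2 ^ k₁ else 0,
         fun x => if x ∈ U₂ then (1 : ℝ) / 2 ^ k₂ else 0, ?_, ?_, ?_, ?_, ?_⟩
  · refine ⟨fun x => by positivity, ?_⟩
    rw [Fintype.sum_equiv (Equiv.addRight a)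
        (fun x => if x + a ∈ U₁ then (1 : ℝ) / 2 ^ k₁ else 0)
        (fun x => if x ∈ U₁ then (1 : ℝ) / 2 ^ k₁ else 0) (fun x => rfl)]
    exact sum_unif U₁ hru1
  · exact ⟨fun x => by positivity, sum_unif U₂ hru2⟩
  · intro x
    have hmono : (1 : ℝ) / 2 ^ k₁ ≤ 1 / 2 ^ (min k₁ k₂) := by
      apply one_div_le_one_div_of_le (by positivity)
      exact pow_le_pow_right₀ one_le_two (min_le_left _ _)
    dsimp only
    split <;> [exact hmono; positivity]
  · intro x
    have hmono : (1 : ℝ) / 2 ^ k₂ ≤ 1 / 2 ^ (min k₁ k₂) := by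
      apply one_div_le_one_div_of_le (by positivity)
      exact pow_le_pow_right₀ one_le_two (min_le_right _ _)
    dsimp only
    split <;> [exact hmono; positivity]
  · intro x
    have hkey : ∀ b : Fin n → ZMod 2, x + a = (b + a) + (x + b) := by
      intro b
      have h : (b + a) + (x + b) = x + a + ((2 : ℕ) • b) := by abel
      rw [h, h2smul, add_zero]
    by_cases hx : x + a ∈ V
    · rw [if_pos hx]
      have hxs : x + a ∈ U₁ ⊔ U₂ := hsup ▸ hx
      obtain ⟨u₁, hu₁, u₂, hu₂, hsum⟩ := Submodule.mem_sup.1 hxs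
      have hsc : ∑ b, ((if b + a ∈ U₁ then (1 : ℝ) / 2 ^ k₁ else 0) *
          (if x + b ∈ U₂ then (1 : ℝ) / 2 ^ k₂ else 0)) =
          ∑ b, (if b = a + u₁ then (1 : ℝ) / 2 ^ k else 0) := by
        apply Finset.sum_congr rfl
        intro b _
        by_cases hb : b = a + u₁
        · subst hb
          have e1 : a + u₁ + a = u₁ := by
            have h : a + u₁ + a = u₁ + ((2 : ℕ) • a) := by abel
            rw [h, h2smul, add_zero]
          have e2 : x + (a + u₁) = u₂ := by
            have h : x + (a + u₁) = (x + a) + u₁ := by abel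
            rw [h, ← hsum]
            have h' : u₁ + u₂ + u₁ = u₂ + ((2 : ℕ) • u₁) := by abel
            rw [h', h2smul, add_zero]
          rw [e1, e2, if_pos hu₁, if_pos hu₂, if_pos rfl, hk, pow_add]
          field_simp
        · rw [if_neg hb]
          by_cases hb1 : b + a ∈ U₁
          · by_cases hb2 : x + b ∈ U₂
            · exfalso
              apply hb
              have heq : (b + a) + (x + b) = u₁ + u₂ := by rw [← hkey b, hsum]
              have hz0 : ((b + a) + u₁) + ((x + b) + u₂) = 0 := by
                have h : ((b + a) + u₁) + ((x + b) + u₂) =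
                    ((b + a) + (x + b)) + (u₁ + u₂) := by abel
                rw [h, heq, hvv]
              have hz : (b + a) + u₁ = (x + b) + u₂ := hcancel hz0
              have hmem1 : (b + a) + u₁ ∈ U₁ := U₁.add_mem hb1 hu₁
              have hmem2 : (b + a) + u₁ ∈ U₂ := hz ▸ U₂.add_mem hb2 hu₂
              have h0 : (b + a) + u₁ = 0 := hdisj _ hmem1 hmem2
              have hba : b + a = u₁ := hcancel h0
              rw [← hba]
              have h : a + (b + a) = b + ((2 : ℕ) • a) := by abel
              rw [h, h2smul, add_zero]
            · simp [hb2]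
          · simp [hb1]
      rw [hsc, Finset.sum_ite_eq' Finset.univ (a + u₁)]
      simp
    · rw [if_neg hx]
      symm
      apply Finset.sum_eq_zero
      intro b _
      by_cases hb1 : b + a ∈ U₁
      · by_cases hb2 : x + b ∈ U₂
        · exfalso
          apply hx
          rw [hkey b, ← hsup]
          exact Submodule.add_mem _ (Submodule.mem_sup_left hb1) (Submodule.mem_sup_right hb2)
        · simp [hb2]
      · simp [hb1]
end

section
/- The inner product function IP(x,y) = sum_{i=1}^{n} x_i * y_i over F_2 on F_2^n x F_2^n satisfies: for any two independent sources A on F_2^n and B on F_2^n with min-entropies k1 and k2 respectively, |bias_{(A,B)}(IP)| <= 2^{(n - k1 - k2)/2}. In particular IP, a degree-2 polynomial in 2n variables, extracts from two independent sources whenever k1 + k2 > n + 2 log(1/eps). -/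
open Finset

noncomputable def sgn : ZMod 2 → ℝ := fun v => if v = 0 then 1 else -1

lemma sgn_add (u v : ZMod 2) : sgn (u + v) = sgn u * sgn v := by
  rcases (show ∀ x : ZMod 2, x = 0 ∨ x = 1 by decide) u with rfl | rfl <;>
    rcases (show ∀ x : ZMod 2, x = 0 ∨ x = 1 by decide) v with rfl | rfl <;> simp [sgn, show ((1:ZMod 2)+1)=0 by decide]

lemma sgn_zero : sgn 0 = 1 := by simp [sgn]

/-- the character a ↦ (-1)^{⟨a,c⟩} -/
noncomputable def chr {n : ℕ} (c : Fin n → ZMod 2) : AddChar (Fin n → ZMod 2) ℝ where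
  toFun a := sgn (∑ i, a i * c i)
  map_zero_eq_one' := by simp [sgn_zero]
  map_add_eq_mul' a b := by
    simp only [Pi.add_apply, add_mul, Finset.sum_add_distrib, sgn_add]

lemma chr_apply {n : ℕ} (c a : Fin n → ZMod 2) : chr c a = sgn (∑ i, a i * c i) := rfl

lemma chr_eq_zero_iff {n : ℕ} (c : Fin n → ZMod 2) : chr c = 0 ↔ c = 0 := by
  constructor
  · intro h
    by_contra hc
    obtain ⟨i, hi⟩ : ∃ i, c i ≠ 0 := by
      by_contra h'; push_neg at h'; exact hc (funext h')
    have hci : c i = 1 := by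
      have h2 : ∀ x : ZMod 2, x ≠ 0 → x = 1 := by decide
      exact h2 _ hi
    have := AddChar.zero_apply (A := Fin n → ZMod 2) (M := ℝ) (fun j => if j = i then 1 else 0)
    rw [← h, chr_apply] at this
    have hsum : (∑ j, (if j = i then (1:ZMod 2) else 0) * c j) = c i := by
      rw [Finset.sum_eq_single i] <;> simp +contextual
    rw [hsum, hci] at this
    norm_num [sgn] at this
  · rintro rfl
    ext a
    simp [chr_apply, sgn_zero]

lemma chr_sum {n : ℕ} (c : Fin n → ZMod 2) :
    ∑ a, chr c a = if c = 0 then (2:ℝ)^n else 0 := by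
  classical
  rw [AddChar.sum_eq_ite]
  simp [chr_eq_zero_iff, Fintype.card_fun]

lemma chr_mul {n : ℕ} (b b' a : Fin n → ZMod 2) : chr b a * chr b' a = chr (b + b') a := by
  simp [chr_apply, ← sgn_add, Pi.add_apply, mul_add, ← Finset.sum_add_distrib]

lemma pi_add_eq_zero_iff {n : ℕ} (b b' : Fin n → ZMod 2) : b + b' = 0 ↔ b = b' := by
  constructor
  · intro h; funext i
    have h2 : ∀ x y : ZMod 2, x + y = 0 → x = y := by decide
    exact h2 _ _ (congrFun h i)
  · rintro rfl; funext i
    have h2 : ∀ x : ZMod 2, x + x = 0 := by decide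
    exact h2 _

/-- Chor–Goldreich: the bias of the inner-product function on two independent sources of
min-entropies `k₁` and `k₂` is at most `2^{(n - k₁ - k₂)/2}`. -/
theorem stmt10 (n k₁ k₂ : ℕ) (pA pB : (Fin n → ZMod 2) → ℝ)
    (hA : IsSource pA) (hB : IsSource pB)
    (h₁ : MinEntGe pA k₁) (h₂ : MinEntGe pB k₂) :
    |∑ a, ∑ b, pA a * pB b * (if (∑ i, a i * b i) = (0 : ZMod 2) then (1 : ℝ) else -1)|
      ≤ (2 : ℝ) ^ (((n : ℝ) - k₁ - k₂) / 2) := by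
  obtain ⟨hA0, hA1⟩ := hA
  obtain ⟨hB0, hB1⟩ := hB
  set g : (Fin n → ZMod 2) → ℝ := fun a => ∑ b, pB b * chr b a with hg
  set S : ℝ := ∑ a, ∑ b, pA a * pB b *
      (if (∑ i, a i * b i) = (0 : ZMod 2) then (1 : ℝ) else -1) with hSdef
  have hS : S = ∑ a, pA a * g a := by
    refine Finset.sum_congr rfl fun a _ => ?_
    rw [Finset.mul_sum]
    refine Finset.sum_congr rfl fun b _ => ?_
    rw [chr_apply, sgn]; ring
  -- Cauchy–Schwarz
  have hCS := Finset.sum_mul_sq_le_sq_mul_sq Finset.univ pA g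
  -- sum of squares of g
  have hgsq : ∑ a, g a ^ 2 = 2 ^ n * ∑ b, pB b ^ 2 := by
    have h1 : ∀ a, g a ^ 2 = ∑ b, ∑ b', pB b * pB b' * chr (b + b') a := by
      intro a
      rw [sq, hg, Finset.sum_mul_sum]
      exact Finset.sum_congr rfl fun b _ => Finset.sum_congr rfl fun b' _ => by
        rw [← chr_mul]; ring
    calc ∑ a, g a ^ 2 = ∑ a, ∑ b, ∑ b', pB b * pB b' * chr (b + b') a :=
          Finset.sum_congr rfl fun a _ => h1 a
      _ = ∑ b, ∑ b', ∑ a, pB b * pB b' * chr (b + b') a := by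
          rw [Finset.sum_comm]
          exact Finset.sum_congr rfl fun b _ => Finset.sum_comm
      _ = ∑ b, ∑ b', pB b * pB b' * (if b = b' then (2:ℝ)^n else 0) := by
          refine Finset.sum_congr rfl fun b _ => Finset.sum_congr rfl fun b' _ => ?_
          rw [← Finset.mul_sum, chr_sum]
          congr 1
          exact if_congr (pi_add_eq_zero_iff b b') rfl rfl
      _ = ∑ b, pB b * pB b * 2 ^ n := by
          refine Finset.sum_congr rfl fun b _ => ?_
          simp [mul_ite, mul_zero, Finset.sum_ite_eq]
      _ = 2 ^ n * ∑ b, pB b ^ 2 := by rw [Finset.mul_sum]; exact Finset.sum_congr rfl fun b _ => by ring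
  have hA2 : ∑ a, pA a ^ 2 ≤ 1 / 2 ^ k₁ := by
    calc ∑ a, pA a ^ 2 ≤ ∑ a, pA a * (1 / 2 ^ k₁) :=
          Finset.sum_le_sum fun a _ => by rw [sq]; exact mul_le_mul_of_nonneg_left (h₁ a) (hA0 a)
      _ = 1 / 2 ^ k₁ := by rw [← Finset.sum_mul, hA1, one_mul]
  have hB2 : ∑ b, pB b ^ 2 ≤ 1 / 2 ^ k₂ := by
    calc ∑ b, pB b ^ 2 ≤ ∑ b, pB b * (1 / 2 ^ k₂) :=
          Finset.sum_le_sum fun b _ => by rw [sq]; exact mul_le_mul_of_nonneg_left (h₂ b) (hB0 b)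
      _ = 1 / 2 ^ k₂ := by rw [← Finset.sum_mul, hB1, one_mul]
  have hApos : (0:ℝ) ≤ ∑ a, pA a ^ 2 := Finset.sum_nonneg fun a _ => sq_nonneg _
  have hSsq : S ^ 2 ≤ 2 ^ n / 2 ^ k₁ / 2 ^ k₂ := by
    have h3 : S ^ 2 ≤ (∑ a, pA a ^ 2) * ∑ a, g a ^ 2 := by rw [hS]; exact hCS
    have h4 : (∑ a, pA a ^ 2) * ∑ a, g a ^ 2 ≤ (1 / 2 ^ k₁) * (2 ^ n * (1 / 2 ^ k₂)) := by
      rw [hgsq]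
      have h5 : (2:ℝ) ^ n * ∑ b, pB b ^ 2 ≤ 2 ^ n * (1 / 2 ^ k₂) :=
        mul_le_mul_of_nonneg_left hB2 (by positivity)
      exact mul_le_mul hA2 h5 (by positivity) (by positivity)
    calc S ^ 2 ≤ (1 / 2 ^ k₁) * (2 ^ n * (1 / 2 ^ k₂)) := h3.trans h4
      _ = 2 ^ n / 2 ^ k₁ / 2 ^ k₂ := by ring
  set R : ℝ := (2 : ℝ) ^ (((n : ℝ) - k₁ - k₂) / 2) with hR
  have hRpos : (0:ℝ) ≤ R := Real.rpow_nonneg (by norm_num) _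
  have hR2 : R ^ 2 = 2 ^ n / 2 ^ k₁ / 2 ^ k₂ := by
    rw [hR, sq, ← Real.rpow_add two_pos, add_halves,
      Real.rpow_sub two_pos, Real.rpow_sub two_pos,
      Real.rpow_natCast, Real.rpow_natCast, Real.rpow_natCast]
  have := Real.sqrt_le_sqrt (hSsq.trans_eq hR2.symm)
  rwa [Real.sqrt_sq_eq_abs, Real.sqrt_sq hRpos] at this
end
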